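/- For every integer k ≥ 1, the simple symmetric fractional hedonic game induced by the complete graph on n = k(k+1)/2 agents (v_i(j) = 1 for all i ≠ j) admits a sequence of IS deviations starting from the singleton partition of length at least (k−1)k(k+1)/6; hence the dynamics of IS deviations in simple symmetric FHGs starting from the singleton partition may take Ω(n√n) steps. -/
import Mathlib


/-- A partition of the agent set `A`, encoded by the map sending each agent to
the coalition containing it. -/
def IsPartition {A : Type*} [DecidableEq A] (π : A → Finset A) : Prop :=
  (∀ i, i ∈ π i) ∧ ∀ i j, i ∈ π j → π i = π j

/-- Strict part of a weak preference relation `r`. -/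
def StrictPref {α : Type*} (r : α → α → Prop) (x y : α) : Prop :=
  r x y ∧ ¬ r y x

/-- `π'` is obtained from `π` by an IS deviation of agent `i`, where
`wp j C D` means that agent `j` weakly prefers coalition `C` to coalition `D`. -/
def IsISDeviation {A : Type*} [DecidableEq A]
    (wp : A → Finset A → Finset A → Prop) (π π' : A → Finset A) (i : A) : Prop :=
  π' i ≠ π i ∧
  (∀ j, j ≠ i → (π' j).erase i = (π j).erase i) ∧
  StrictPref (wp i) (π' i) (π i) ∧
  ∀ j ∈ (π' i).erase i, wp j (π' j) (π j)

/-- One step of the dynamics of IS deviations between partitions. -/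
def ISStep {A : Type*} [DecidableEq A]
    (wp : A → Finset A → Finset A → Prop) (π π' : A → Finset A) : Prop :=
  IsPartition π ∧ IsPartition π' ∧ ∃ i, IsISDeviation wp π π' i

/-- A partition is individually stable if no IS deviation from it is possible. -/
def IndividuallyStable {A : Type*} [DecidableEq A]
    (wp : A → Finset A → Finset A → Prop) (π : A → Finset A) : Prop :=
  IsPartition π ∧ ∀ π' : A → Finset A, ¬ ISStep wp π π'

/-- `r` is a weak order (total preorder) on the set `S`. -/
def WeakOrderOn {α : Type*} (r : α → α → Prop) (S : Set α) : Prop :=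
  (∀ x ∈ S, ∀ y ∈ S, r x y ∨ r y x) ∧
  ∀ x ∈ S, ∀ y ∈ S, ∀ z ∈ S, r x y → r y z → r x z

/-- `r` is antisymmetric on `S`, i.e. the preferences are strict. -/
def StrictPrefsOn {α : Type*} (r : α → α → Prop) (S : Set α) : Prop :=
  ∀ x ∈ S, ∀ y ∈ S, r x y → r y x → x = y

/-- `r` is (naturally) single-peaked on `S` with respect to the natural linear
order of `α`: whenever `y` lies strictly between `x` and `z`, `x ≻ y` implies `y ≿ z`. -/
def SinglePeakedOn {α : Type*} [LinearOrder α] (r : α → α → Prop) (S : Set α) : Prop :=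
  ∀ x ∈ S, ∀ y ∈ S, ∀ z ∈ S,
    ((x < y ∧ y < z) ∨ (z < y ∧ y < x)) → StrictPref r x y → r y z

/-- The utility of agent `i` for the coalition `C` in a fractional hedonic game
with utility functions `v`: the average value of the members of `C`. -/
def fhgUtil {A : Type*} [DecidableEq A] (v : A → A → ℚ) (i : A) (C : Finset A) : ℚ :=
  (∑ j ∈ C, v i j) / (C.card : ℚ)

/-- Coalition preferences of a fractional hedonic game. -/
def fhgPref {A : Type*} [DecidableEq A] (v : A → A → ℚ) :
    A → Finset A → Finset A → Prop :=
  fun i C D => fhgUtil v i D ≤ fhgUtil v i C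

-- utility formula
lemma util_mem {n : ℕ} (i : Fin n) (C : Finset (Fin n)) (hi : i ∈ C) :
    fhgUtil (fun i j : Fin n => if i = j then (0:ℚ) else 1) i C
      = ((C.card : ℚ) - 1) / (C.card : ℚ) := by
  unfold fhgUtil
  congr 1
  have : ∀ j ∈ C, (if i = j then (0:ℚ) else 1) = 1 - (if j = i then 1 else 0) := by
    intro j _; by_cases h : i = j <;> simp [h, eq_comm]
  rw [Finset.sum_congr rfl this, Finset.sum_sub_distrib, Finset.sum_ite_eq' C i (fun _ => (1:ℚ))]
  simp [hi]

lemma frac_le {c d : ℕ} (hc : 1 ≤ c) (hcd : c ≤ d) :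
    ((c : ℚ) - 1) / c ≤ ((d : ℚ) - 1) / d := by
  have hc0 : (0:ℚ) < c := by exact_mod_cast hc
  have hd0 : (0:ℚ) < d := lt_of_lt_of_le hc0 (by exact_mod_cast hcd)
  rw [div_le_div_iff₀ hc0 hd0]
  have : (c:ℚ) ≤ d := by exact_mod_cast hcd
  nlinarith

lemma frac_lt {c d : ℕ} (hc : 1 ≤ c) (hcd : c < d) :
    ((c : ℚ) - 1) / c < ((d : ℚ) - 1) / d := by
  have hc0 : (0:ℚ) < c := by exact_mod_cast hc
  have hd0 : (0:ℚ) < d := lt_of_lt_of_le hc0 (by exact_mod_cast hcd.le)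
  rw [div_lt_div_iff₀ hc0 hd0]
  have : (c:ℚ) < d := by exact_mod_cast hcd
  nlinarith

lemma part_of_pid {n : ℕ} (pid : Fin n → ℕ) :
    IsPartition (fun a => Finset.univ.filter fun b => pid b = pid a) := by
  constructor
  · intro i; simp
  · intro i j h
    simp only [Finset.mem_filter, Finset.mem_univ, true_and] at h
    ext b; simp [h]

lemma step_lemma {n : ℕ} (pid pid' : Fin n → ℕ) (x : Fin n)
    (hoff : ∀ b, b ≠ x → pid' b = pid b) (hch : pid' x ≠ pid x)
    (hcard : (Finset.univ.filter fun b => pid b = pid x).card ≤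
             (Finset.univ.filter fun b => pid b = pid' x).card) :
    ISStep (fhgPref fun i j : Fin n => if i = j then (0:ℚ) else 1)
      (fun a => Finset.univ.filter fun b => pid b = pid a)
      (fun a => Finset.univ.filter fun b => pid' b = pid' a) := by
  classical
  set Old : Finset (Fin n) := Finset.univ.filter fun b => pid b = pid x with hOld
  set Tgt : Finset (Fin n) := Finset.univ.filter fun b => pid b = pid' x with hTgt
  set New : Finset (Fin n) := Finset.univ.filter fun b => pid' b = pid' x with hNew
  have hxOld : x ∈ Old := by simp [hOld]
  have hxNew : x ∈ New := by simp [hNew]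
  have hxTgt : x ∉ Tgt := by
    simp only [hTgt, Finset.mem_filter, Finset.mem_univ, true_and]
    exact fun h => hch h.symm
  have hNT : New = insert x Tgt := by
    ext b
    by_cases hb : b = x
    · simp [hb, hxNew]
    · simp only [hNew, hTgt, Finset.mem_filter, Finset.mem_univ, true_and,
        Finset.mem_insert, hb, false_or]
      rw [hoff b hb]
  have hcardNew : New.card = Tgt.card + 1 := by
    rw [hNT, Finset.card_insert_of_notMem hxTgt]
  have hc1 : 1 ≤ Old.card := Finset.card_pos.mpr ⟨x, hxOld⟩
  have hTgtErase : Tgt = New.erase x := by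
    rw [hNT, Finset.erase_insert hxTgt]
  refine ⟨part_of_pid pid, part_of_pid pid', x, ?_, ?_, ?_, ?_⟩
  · -- New ≠ Old
    intro h
    have h' : New = Old := h
    have : New.card = Old.card := by rw [h']
    omega
  · intro j hj
    ext b
    by_cases hb : b = x
    · simp [hb]
    · simp only [Finset.mem_erase, Finset.mem_filter, Finset.mem_univ, true_and, hb,
        ne_eq, not_false_iff]
      rw [hoff b hb, hoff j hj]
  · -- StrictPref
    have hnew : fhgUtil (fun i j : Fin n => if i = j then (0:ℚ) else 1) x New
        = ((New.card : ℚ) - 1) / New.card := util_mem x New hxNew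
    have hold : fhgUtil (fun i j : Fin n => if i = j then (0:ℚ) else 1) x Old
        = ((Old.card : ℚ) - 1) / Old.card := util_mem x Old hxOld
    have hlt : fhgUtil (fun i j : Fin n => if i = j then (0:ℚ) else 1) x Old
        < fhgUtil (fun i j : Fin n => if i = j then (0:ℚ) else 1) x New := by
      rw [hnew, hold]
      exact frac_lt hc1 (by omega)
    exact ⟨le_of_lt hlt, not_le.mpr hlt⟩
  · intro j hj
    have hjx : j ≠ x := (Finset.mem_erase.mp hj).1
    have hjNew : j ∈ New := (Finset.mem_erase.mp hj).2
    have hjTgt : j ∈ Tgt := by rw [hTgtErase]; exact Finset.mem_erase.mpr ⟨hjx, hjNew⟩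
    have hpid'j : pid' j = pid' x := by
      simpa [hNew] using hjNew
    have hpidj : pid j = pid' x := by
      rw [← hoff j hjx]; exact hpid'j
    have hπ'j : (Finset.univ.filter fun b => pid' b = pid' j) = New := by
      rw [hNew]; congr 1; ext b; rw [hpid'j]
    have hπj : (Finset.univ.filter fun b => pid b = pid j) = Tgt := by
      rw [hTgt]; congr 1; ext b; rw [hpidj]
    show fhgUtil (fun i j : Fin n => if i = j then (0:ℚ) else 1) j
        (Finset.univ.filter fun b => pid b = pid j) ≤
      fhgUtil (fun i j : Fin n => if i = j then (0:ℚ) else 1) j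
        (Finset.univ.filter fun b => pid' b = pid' j)
    rw [hπ'j, hπj, util_mem j New hjNew, util_mem j Tgt hjTgt, hcardNew]
    have hd1 : 1 ≤ Tgt.card := Finset.card_pos.mpr ⟨j, hjTgt⟩
    have h2 := frac_le hd1 (Nat.le_succ Tgt.card)
    push_cast at h2 ⊢
    convert h2 using 2 <;> ring

namespace CFHG


def T : ℕ → ℕ
  | 0 => 0
  | j+1 => T j + j + 1

lemma le_T (j : ℕ) : j ≤ T j := by induction j with
  | zero => simp [T]
  | succ j ih => show j + 1 ≤ T j + j + 1; omega

lemma T_mono : Monotone T := by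
  apply monotone_nat_of_le_succ
  intro j; show T j ≤ T j + j + 1; omega

lemma T_strictMono : StrictMono T := by
  apply strictMono_nat_of_lt_succ
  intro j; show T j < T j + j + 1; omega

lemma two_T (j : ℕ) : 2 * T j = j * (j + 1) := by
  induction j with
  | zero => simp [T]
  | succ j ih => simp [T]; ring_nf; ring_nf at ih; omega

def rowOf (b : ℕ) : ℕ := Nat.findGreatest (fun j => T j ≤ b) b

lemma rowOf_spec (b : ℕ) : T (rowOf b) ≤ b ∧ b < T (rowOf b + 1) := by
  constructor
  · exact Nat.findGreatest_spec (P := fun j => T j ≤ b) (m := 0) (Nat.zero_le b) (show T 0 ≤ b by simp [T])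
  · by_contra h
    push_neg at h
    have h1 : rowOf b + 1 ≤ b := le_trans (le_T _) h
    have := Nat.le_findGreatest (P := fun j => T j ≤ b) h1 h
    unfold rowOf at this
    omega

lemma rowOf_eq {b j : ℕ} (h1 : T j ≤ b) (h2 : b < T (j+1)) : rowOf b = j := by
  obtain ⟨s1, s2⟩ := rowOf_spec b
  rcases lt_trichotomy (rowOf b) j with h | h | h
  · have : T (rowOf b + 1) ≤ T j := T_mono h
    omega
  · exact h
  · have : T (j + 1) ≤ T (rowOf b) := T_mono h
    omega

/-- `T m - 1`, written without subtraction. -/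
def Tm1 (m : ℕ) : ℕ := T (m-1) + (m-1)

lemma Tm1_eq (m : ℕ) (hm : 1 ≤ m) : Tm1 m + 1 = T m := by
  obtain ⟨m', rfl⟩ : ∃ m', m = m' + 1 := ⟨m - 1, by omega⟩
  simp [Tm1, T]

/-- station of agent `a` (valid for `a < Tm1 m`). -/
def stOf (m a : ℕ) : ℕ := if a < m - 1 then a + 2 else rowOf (a - (m-1)) + 2

lemma stOf_range {m a : ℕ} (hm : 2 ≤ m) (ha : a < Tm1 m) :
    2 ≤ stOf m a ∧ stOf m a ≤ m := by
  unfold stOf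
  split_ifs with h
  · omega
  · have hb : a - (m-1) < T (m-1) := by unfold Tm1 at ha; omega
    have : rowOf (a - (m-1)) ≤ m - 2 := by
      by_contra hc
      push_neg at hc
      have : T (m-1) ≤ T (rowOf (a - (m-1))) := T_mono (by omega)
      have := (rowOf_spec (a - (m-1))).1
      omega
    omega

lemma stOf_leader {m j : ℕ} (hm : 2 ≤ m) (hj2 : 2 ≤ j) (hjm : j ≤ m) :
    stOf m (j - 2) = j := by
  unfold stOf
  rw [if_pos (by omega)]
  omega

lemma stOf_eq_iff {m j a : ℕ} (hm : 2 ≤ m) (hj2 : 2 ≤ j) (hjm : j ≤ m)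
    (ha : a < Tm1 m) :
    stOf m a = j ↔ (a = j - 2 ∨ (m - 1 + T (j-2) ≤ a ∧ a < m - 1 + T (j-1))) := by
  unfold stOf
  split_ifs with h
  · constructor
    · intro he; left; omega
    · rintro (he | ⟨h1, h2⟩)
      · omega
      · exfalso; omega
  · push_neg at h
    have hTj : T (j-2) + (j-2) + 1 = T (j-1) := by
      have : j - 1 = (j-2) + 1 := by omega
      rw [this, T]
    constructor
    · intro he
      right
      have hr : rowOf (a - (m-1)) = j - 2 := by omega
      obtain ⟨s1, s2⟩ := rowOf_spec (a - (m-1))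
      rw [hr] at s1 s2
      have : (j - 2) + 1 = j - 1 := by omega
      rw [this] at s2
      omega
    · rintro (he | ⟨h1, h2⟩)
      · omega
      · have : rowOf (a - (m-1)) = j - 2 := by
          apply rowOf_eq (by omega)
          have : (j - 2) + 1 = j - 1 := by omega
          rw [this]; omega
        omega


def pid1 (m τ a : ℕ) : ℕ := if a < Tm1 m ∧ a < m - 1 + τ then stOf m a else m + 1 + a

def pid2 (m s a : ℕ) : ℕ :=
  if a < Tm1 m then stOf m a
  else if a < Tm1 m + s / (m-1) then m
  else if a = Tm1 m + s / (m-1) ∧ s % (m-1) ≠ 0 then s % (m-1) + 1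
  else m + 1 + a

def pileId (m τ a : ℕ) : ℕ := if τ < T (m-1) then pid1 m τ a else pid2 m (τ - T (m-1)) a

lemma pid2_zero (m a : ℕ) : pid2 m 0 a = pid1 m (T (m-1)) a := by
  unfold pid2 pid1
  rw [Nat.zero_div, Nat.zero_mod]
  have h : Tm1 m = m - 1 + T (m-1) := by unfold Tm1; omega
  split_ifs <;> omega

lemma pileId_eq_pid1 {m τ : ℕ} (hτ : τ ≤ T (m-1)) (a : ℕ) :
    pileId m τ a = pid1 m τ a := by
  unfold pileId
  rcases lt_or_eq_of_le hτ with h | h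
  · rw [if_pos h]
  · rw [if_neg (by omega), h, Nat.sub_self, pid2_zero]

lemma pileId_eq_pid2 {m s : ℕ} (a : ℕ) :
    pileId m (T (m-1) + s) a = pid2 m s a := by
  unfold pileId
  rw [if_neg (by omega)]
  congr 1
  omega

lemma pid1_singleton {m τ c b : ℕ} (hm : 2 ≤ m) (h : pid1 m τ b = m + 1 + c) : b = c := by
  unfold pid1 at h
  split_ifs at h with h1
  · have := stOf_range hm h1.1; omega
  · omega

lemma pid2_singleton {m s c b : ℕ} (hm : 2 ≤ m) (h : pid2 m s b = m + 1 + c) : b = c := by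
  have hp : s % (m-1) < m - 1 := Nat.mod_lt _ (by omega)
  unfold pid2 at h
  split_ifs at h with h1 h2 h3
  · have := stOf_range hm h1; omega
  · omega
  · omega
  · omega

lemma pid2_leader {m s j : ℕ} (hm : 2 ≤ m) (hj2 : 2 ≤ j) (hjm : j ≤ m) :
    pid2 m s (j - 2) = j := by
  have h1 : j - 2 < Tm1 m := by unfold Tm1; omega
  unfold pid2
  rw [if_pos h1, stOf_leader hm hj2 hjm]

lemma pid2_station_iff {m s j : ℕ} (hm : 2 ≤ m) (hj2 : 2 ≤ j) (hjm : j ≤ m - 1) (b : ℕ) :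
    pid2 m s b = j ↔
      ((b < Tm1 m ∧ stOf m b = j) ∨
        (b = Tm1 m + s / (m-1) ∧ s % (m-1) + 1 = j ∧ s % (m-1) ≠ 0)) := by
  have hts : Tm1 m ≤ Tm1 m + s / (m-1) := Nat.le_add_right _ _
  have hp : s % (m-1) < m - 1 := Nat.mod_lt _ (by omega)
  unfold pid2
  split_ifs with h1 h2 h3
  · constructor
    · intro h; exact Or.inl ⟨h1, h⟩
    · rintro (⟨_, h⟩ | ⟨h, _, _⟩)
      · exact h
      · omega
  · constructor
    · intro h; omega
    · rintro (⟨h, _⟩ | ⟨h, _, _⟩) <;> omega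
  · constructor
    · intro h; exact Or.inr ⟨h3.1, h, h3.2⟩
    · rintro (⟨h, _⟩ | ⟨_, h, _⟩) <;> omega
  · constructor
    · intro h; omega
    · rintro (⟨h, _⟩ | ⟨hb, hj, hp⟩)
      · omega
      · exact absurd ⟨hb, hp⟩ h3

lemma pid2_sink {m s b : ℕ} (hb : b < Tm1 m) (hst : stOf m b = m) :
    pid2 m s b = m := by
  unfold pid2
  rw [if_pos hb, hst]


def seqOf (n : ℕ) (f : ℕ → ℕ) : Fin n → Finset (Fin n) :=
  fun a => Finset.univ.filter fun b => f b.val = f a.val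

def stationFin (n m j : ℕ) : Finset (Fin n) :=
  Finset.univ.filter fun b => b.val < Tm1 m ∧ stOf m b.val = j

lemma stationFin_card {n m j : ℕ} (hm : 2 ≤ m) (hj2 : 2 ≤ j) (hjm : j ≤ m)
    (hTn : Tm1 m ≤ n) : (stationFin n m j).card = j := by
  have hb1 : T (j-1) ≤ T (m-1) := T_mono (by omega)
  have hTj : T (j-2) + (j-1) = T (j-1) := by
    have hj1 : j - 1 = (j-2)+1 := by omega
    rw [hj1, T]; omega
  have hTm1 : Tm1 m = T (m-1) + (m-1) := rfl
  have hIco : ∀ c ∈ Finset.Ico (m-1+T (j-2)) (m-1+T (j-1)), c < n := by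
    intro c hc
    simp only [Finset.mem_Ico] at hc
    omega
  have hlead : j - 2 < n := by omega
  have hins : stationFin n m j =
      insert ⟨j-2, hlead⟩ ((Finset.Ico (m-1+T (j-2)) (m-1+T (j-1))).attachFin hIco) := by
    ext b
    simp only [stationFin, Finset.mem_filter, Finset.mem_univ, true_and, Finset.mem_insert,
      Finset.mem_attachFin, Finset.mem_Ico]
    constructor
    · rintro ⟨hb, hst⟩
      rcases (stOf_eq_iff hm hj2 hjm hb).mp hst with h | h
      · left; exact Fin.ext h
      · right; exact h
    · rintro (h | h)
      · have hbv : b.val = j - 2 := by rw [h]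
        have hblt : b.val < Tm1 m := by omega
        refine ⟨hblt, ?_⟩
        rw [hbv]
        exact stOf_leader hm hj2 hjm
      · have hblt : b.val < Tm1 m := by omega
        exact ⟨hblt, (stOf_eq_iff hm hj2 hjm hblt).mpr (Or.inr h)⟩
  rw [hins, Finset.card_insert_of_notMem, Finset.card_attachFin, Nat.card_Ico]
  · omega
  · simp only [Finset.mem_attachFin, Finset.mem_Ico]
    omega

lemma build_step (n m τ : ℕ) (hm : 2 ≤ m) (hτ : τ < T (m-1)) (hTn : T m ≤ n) :
    ISStep (fhgPref fun i j : Fin n => if i = j then (0:ℚ) else 1)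
      (seqOf n (pid1 m τ)) (seqOf n (pid1 m (τ+1))) := by
  have hTm1 : Tm1 m = T (m-1) + (m-1) := rfl
  have hTm : Tm1 m + 1 = T m := Tm1_eq m (by omega)
  have hx'Tm1 : m - 1 + τ < Tm1 m := by omega
  have hTm1n : Tm1 m < n := by omega
  have hx'n : m - 1 + τ < n := by omega
  have hpidx : pid1 m τ (m - 1 + τ) = m + 1 + (m - 1 + τ) := by
    unfold pid1; rw [if_neg (by omega)]
  have hpidx' : pid1 m (τ+1) (m - 1 + τ) = stOf m (m - 1 + τ) := by
    unfold pid1; rw [if_pos ⟨hx'Tm1, by omega⟩]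
  have hrange := stOf_range hm hx'Tm1
  apply step_lemma (fun b => pid1 m τ b.val) (fun b => pid1 m (τ+1) b.val)
    (⟨m - 1 + τ, hx'n⟩ : Fin n)
  · -- hoff
    intro b hb
    have hbv : b.val ≠ m - 1 + τ := fun h => hb (Fin.ext h)
    unfold pid1
    split_ifs <;> omega
  · -- hch
    show pid1 m (τ+1) (m-1+τ) ≠ pid1 m τ (m-1+τ)
    rw [hpidx, hpidx']
    omega
  · -- hcard
    simp only [Fin.val_mk]
    have hOld : (Finset.univ.filter fun b : Fin n => pid1 m τ b.val = pid1 m τ (m-1+τ))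
        = {⟨m-1+τ, hx'n⟩} := by
      ext b
      simp only [Finset.mem_filter, Finset.mem_univ, true_and, Finset.mem_singleton]
      rw [hpidx]
      constructor
      · intro h
        exact Fin.ext (pid1_singleton hm h)
      · intro h
        rw [h]
        exact hpidx
    rw [hOld, Finset.card_singleton]
    apply Finset.card_pos.mpr
    refine ⟨⟨stOf m (m-1+τ) - 2, by omega⟩, ?_⟩
    simp only [Finset.mem_filter, Finset.mem_univ, true_and]
    rw [hpidx']
    have hlead : pid1 m τ (stOf m (m-1+τ) - 2) = stOf m (stOf m (m-1+τ) - 2) := by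
      unfold pid1
      rw [if_pos ⟨by omega, by omega⟩]
    rw [hlead, stOf_leader hm hrange.1 hrange.2]


lemma feed_step (n m s : ℕ) (hm : 2 ≤ m) (hTn : T m ≤ n)
    (hx : Tm1 m + s / (m-1) < n) :
    ISStep (fhgPref fun i j : Fin n => if i = j then (0:ℚ) else 1)
      (seqOf n (pid2 m s)) (seqOf n (pid2 m (s+1))) := by
  have hTm1 : Tm1 m = T (m-1) + (m-1) := rfl
  have hTm : Tm1 m + 1 = T m := Tm1_eq m (by omega)
  have hW : 1 ≤ m - 1 := by omega
  have hp : s % (m-1) < m - 1 := Nat.mod_lt _ (by omega)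
  have hdm := Nat.div_add_mod s (m-1)
  obtain ⟨q, hq⟩ : ∃ q, s / (m-1) = q := ⟨_, rfl⟩
  obtain ⟨p, hpe⟩ : ∃ p, s % (m-1) = p := ⟨_, rfl⟩
  have hpid_x : pid2 m s (Tm1 m + s / (m-1))
      = if s % (m-1) = 0 then m + 1 + (Tm1 m + s / (m-1)) else s % (m-1) + 1 := by
    unfold pid2
    rw [if_neg (by omega), if_neg (by omega)]
    by_cases h0 : s % (m-1) = 0
    · rw [if_neg (by simp [h0]), if_pos h0]
    · rw [if_pos ⟨rfl, h0⟩, if_neg h0]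
  have hOldSingle : s % (m-1) = 0 →
      (Finset.univ.filter fun b : Fin n =>
        pid2 m s b.val = m + 1 + (Tm1 m + s / (m-1))) = {(⟨Tm1 m + s / (m-1), hx⟩ : Fin n)} := by
    intro h0
    ext b
    simp only [Finset.mem_filter, Finset.mem_univ, true_and, Finset.mem_singleton]
    constructor
    · intro h
      exact Fin.ext (pid2_singleton hm h)
    · intro h
      rw [h]
      show pid2 m s (Tm1 m + s / (m-1)) = _
      rw [hpid_x, if_pos h0]
  have hOldStation : s % (m-1) ≠ 0 →
      (Finset.univ.filter fun b : Fin n =>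
        pid2 m s b.val = s % (m-1) + 1)
        = insert (⟨Tm1 m + s / (m-1), hx⟩ : Fin n) (stationFin n m (s % (m-1) + 1)) := by
    intro h0
    ext b
    simp only [Finset.mem_filter, Finset.mem_univ, true_and, Finset.mem_insert, stationFin]
    rw [pid2_station_iff hm (by omega) (by omega)]
    constructor
    · rintro (h | h)
      · right
        exact h
      · left; exact Fin.ext h.1
    · rintro (h | h)
      · right
        have hbv : b.val = Tm1 m + s / (m-1) := by rw [h]
        exact ⟨hbv, rfl, h0⟩
      · exact Or.inl h
  have hXnotSt : ∀ j, (⟨Tm1 m + s / (m-1), hx⟩ : Fin n) ∉ stationFin n m j := by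
    intro j hcon
    simp only [stationFin, Finset.mem_filter, Finset.mem_univ, true_and] at hcon
    have : (⟨Tm1 m + s / (m-1), hx⟩ : Fin n).val = Tm1 m + s / (m-1) := rfl
    omega
  rcases Nat.lt_or_ge (s % (m-1) + 1) (m-1) with hc | hc
  · -- Case I : no rollover
    have hs1 : s + 1 = (s % (m-1) + 1) + (m-1) * (s/(m-1)) := by omega
    have hdiv : (s+1)/(m-1) = s/(m-1) := by
      rw [hs1, Nat.add_mul_div_left _ _ (show 0 < m-1 by omega), Nat.div_eq_of_lt hc]
      omega
    have hmod : (s+1) % (m-1) = s % (m-1) + 1 := by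
      rw [hs1, Nat.add_mul_mod_self_left]
      exact Nat.mod_eq_of_lt hc
    have hpids_x : pid2 m (s+1) (Tm1 m + s / (m-1)) = s % (m-1) + 2 := by
      unfold pid2
      rw [hdiv, hmod, if_neg (by omega), if_neg (by omega), if_pos ⟨rfl, by omega⟩]
    apply step_lemma (fun b => pid2 m s b.val) (fun b => pid2 m (s+1) b.val)
      (⟨Tm1 m + s / (m-1), hx⟩ : Fin n)
    · intro b hb
      have hbv : b.val ≠ Tm1 m + s / (m-1) := fun h => hb (Fin.ext h)
      unfold pid2
      rw [hdiv, hmod]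
      split_ifs <;> omega
    · show pid2 m (s+1) (Tm1 m + s / (m-1)) ≠ pid2 m s (Tm1 m + s / (m-1))
      rw [hpids_x, hpid_x]
      split_ifs <;> omega
    · show (Finset.univ.filter fun b : Fin n =>
          pid2 m s b.val = pid2 m s (Tm1 m + s / (m-1))).card ≤
        (Finset.univ.filter fun b : Fin n =>
          pid2 m s b.val = pid2 m (s+1) (Tm1 m + s / (m-1))).card
      rw [hpids_x, hpid_x]
      have hTgt : (Finset.univ.filter fun b : Fin n =>
          pid2 m s b.val = s % (m-1) + 2) = stationFin n m (s % (m-1) + 2) := by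
        ext b
        simp only [Finset.mem_filter, Finset.mem_univ, true_and, stationFin]
        rw [pid2_station_iff hm (by omega) (by omega)]
        constructor
        · rintro (h | h)
          · exact h
          · omega
        · intro h
          exact Or.inl h
      rw [hTgt]
      have hTgtCard : (stationFin n m (s % (m-1) + 2)).card = s % (m-1) + 2 :=
        stationFin_card hm (by omega) (by omega) (by omega)
      by_cases h0 : s % (m-1) = 0
      · rw [if_pos h0, hOldSingle h0, Finset.card_singleton]
        omega
      · rw [if_neg h0, hOldStation h0,
          Finset.card_insert_of_notMem (hXnotSt _),
          stationFin_card hm (by omega) (by omega) (by omega)]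
        omega
  · -- Case II : rollover
    have hpeq : s % (m-1) + 1 = m - 1 := by omega
    have hexp : (m-1) * (s/(m-1) + 1) = (m-1) * (s/(m-1)) + (m-1) := by ring
    have hs1 : s + 1 = (m-1) * (s/(m-1) + 1) := by omega
    have hdiv : (s+1)/(m-1) = s/(m-1) + 1 := by
      rw [hs1, Nat.mul_div_cancel_left _ (show 0 < m-1 by omega)]
    have hmod : (s+1) % (m-1) = 0 := by
      rw [hs1, Nat.mul_mod_right]
    have hpids_x : pid2 m (s+1) (Tm1 m + s / (m-1)) = m := by
      unfold pid2
      rw [hdiv, if_neg (by omega), if_pos (by omega)]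
    apply step_lemma (fun b => pid2 m s b.val) (fun b => pid2 m (s+1) b.val)
      (⟨Tm1 m + s / (m-1), hx⟩ : Fin n)
    · intro b hb
      have hbv : b.val ≠ Tm1 m + s / (m-1) := fun h => hb (Fin.ext h)
      unfold pid2
      rw [hdiv, hmod]
      split_ifs <;> omega
    · show pid2 m (s+1) (Tm1 m + s / (m-1)) ≠ pid2 m s (Tm1 m + s / (m-1))
      rw [hpids_x, hpid_x]
      split_ifs <;> omega
    · show (Finset.univ.filter fun b : Fin n =>
          pid2 m s b.val = pid2 m s (Tm1 m + s / (m-1))).card ≤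
        (Finset.univ.filter fun b : Fin n =>
          pid2 m s b.val = pid2 m (s+1) (Tm1 m + s / (m-1))).card
      rw [hpids_x, hpid_x]
      have hsubTgt : stationFin n m m ⊆
          (Finset.univ.filter fun b : Fin n => pid2 m s b.val = m) := by
        intro b hb
        simp only [stationFin, Finset.mem_filter, Finset.mem_univ, true_and] at hb ⊢
        exact pid2_sink hb.1 hb.2
      have hTgtcard : m ≤
          (Finset.univ.filter fun b : Fin n => pid2 m s b.val = m).card := by
        calc m = (stationFin n m m).card :=
              (stationFin_card hm (by omega) (by omega) (by omega)).symm
          _ ≤ _ := Finset.card_le_card hsubTgt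
      by_cases h0 : s % (m-1) = 0
      · rw [if_pos h0, hOldSingle h0, Finset.card_singleton]
        omega
      · rw [if_neg h0, hOldStation h0,
          Finset.card_insert_of_notMem (hXnotSt _),
          stationFin_card hm (by omega) (by omega) (by omega)]
        omega


lemma seq_zero (n m : ℕ) (hm : 2 ≤ m) : seqOf n (pid1 m 0) = fun a => {a} := by
  funext a
  ext b
  simp only [seqOf, Finset.mem_filter, Finset.mem_univ, true_and, Finset.mem_singleton]
  have h1 : Tm1 m = T (m-1) + (m-1) := rfl
  constructor
  · intro h
    refine Fin.ext ?_
    unfold pid1 stOf at h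
    split_ifs at h <;> omega
  · intro h; rw [h]

set_option maxHeartbeats 1000000 in
lemma arith (k q : ℕ) (hk : 2 ≤ k) (hq : k / 2 = q) :
    (k-1)*k*(k+1) ≤ 6 * (T q + (T k - Tm1 (q+1)) * q) := by
  have hq1 : 1 ≤ q := by omega
  have hk2 : k = 2*q ∨ k = 2*q+1 := by omega
  have hTm1 : Tm1 (q+1) = T q + q := by unfold Tm1; simp
  rw [hTm1]
  have e1 := two_T q
  have e2 := two_T k
  have hTq1 : T (q+1) = T q + q + 1 := rfl
  have hmono : T (q+1) ≤ T k := T_mono (by omega)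
  obtain ⟨d, hd⟩ : ∃ d, T k - (T q + q) = d := ⟨_, rfl⟩
  have e3 : d + (T q + q) = T k := by omega
  rw [hd]
  obtain ⟨k1, hk1⟩ : ∃ k1, k = k1 + 1 := ⟨k-1, by omega⟩
  have hk1' : k - 1 = k1 := by omega
  rw [hk1']
  have e4 : 2*d + q*(q+1) + 2*q = k*(k+1) := by omega
  zify
  have hq0 : (0:ℤ) ≤ (q:ℤ) := by positivity
  have hTqz : 2*((T q : ℕ):ℤ) = (q:ℤ)*((q:ℤ)+1) := by exact_mod_cast e1
  have e4z : 2*(d:ℤ) + (q:ℤ)*((q:ℤ)+1) + 2*(q:ℤ) = (k:ℤ)*((k:ℤ)+1) := by exact_mod_cast e4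
  have hkk1 : (k:ℤ) = (k1:ℤ) + 1 := by exact_mod_cast hk1
  rcases hk2 with h | h
  · have hkz : (k:ℤ) = 2*(q:ℤ) := by exact_mod_cast h
    have hk1z : (k1:ℤ) = 2*(q:ℤ) - 1 := by omega
    rw [hkz] at e4z
    have hd2 : 2*(d:ℤ) = 3*(q:ℤ)^2 - (q:ℤ) := by ring_nf at e4z ⊢; linarith
    have h6dq : 6*((d:ℤ)*(q:ℤ)) = 3*(q:ℤ)*(3*(q:ℤ)^2 - (q:ℤ)) := by
      rw [← hd2]; ring
    rw [hk1z, hkz]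
    ring_nf
    ring_nf at h6dq hTqz
    linarith [h6dq, hTqz, hq0, pow_nonneg hq0 3]
  · have hkz : (k:ℤ) = 2*(q:ℤ)+1 := by exact_mod_cast h
    have hk1z : (k1:ℤ) = 2*(q:ℤ) := by omega
    rw [hkz] at e4z
    have hd2 : 2*(d:ℤ) = 3*(q:ℤ)^2 + 3*(q:ℤ) + 2 := by ring_nf at e4z ⊢; linarith
    have h6dq : 6*((d:ℤ)*(q:ℤ)) = 3*(q:ℤ)*(3*(q:ℤ)^2 + 3*(q:ℤ) + 2) := by
      rw [← hd2]; ring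
    rw [hk1z, hkz]
    ring_nf
    ring_nf at h6dq hTqz
    linarith [h6dq, hTqz, hq0, pow_nonneg hq0 3]

end CFHG

/-- For every `k ≥ 1`, the simple symmetric fractional hedonic game induced by
the complete graph on `n = k * (k + 1) / 2` agents admits a sequence of IS
deviations starting from the singleton partition of length at least
`(k - 1) * k * (k + 1) / 6`. -/
theorem complete_fhg_long_IS_sequence (k : ℕ) (hk : 1 ≤ k) :
    ∃ (m : ℕ) (seq : ℕ → Fin (k * (k + 1) / 2) → Finset (Fin (k * (k + 1) / 2))),
      (k - 1) * k * (k + 1) / 6 ≤ m ∧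
      seq 0 = (fun a => {a}) ∧
      ∀ l < m,
        ISStep (fhgPref fun i j : Fin (k * (k + 1) / 2) => if i = j then (0 : ℚ) else 1)
          (seq l) (seq (l + 1)) := by
  classical
  open CFHG in
  by_cases hk1 : k ≤ 1
  · have hke : k = 1 := by omega
    subst hke
    exact ⟨0, fun _ a => {a}, by norm_num, rfl, fun l hl => absurd hl (Nat.not_lt_zero l)⟩
  push_neg at hk1
  have hk2 : 2 ≤ k := hk1
  have hn : k*(k+1)/2 = CFHG.T k := by have := CFHG.two_T k; omega
  obtain ⟨m, hmdef⟩ : ∃ m, k/2 + 1 = m := ⟨_, rfl⟩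
  have hm : 2 ≤ m := by omega
  have hmk : m ≤ k := by omega
  have hTmn : CFHG.T m ≤ k*(k+1)/2 := by rw [hn]; exact CFHG.T_mono hmk
  have hTm1n : CFHG.Tm1 m < k*(k+1)/2 := by
    have := CFHG.Tm1_eq m (by omega); omega
  refine ⟨CFHG.T (m-1) + (k*(k+1)/2 - CFHG.Tm1 m) * (m-1),
    fun τ => CFHG.seqOf (k*(k+1)/2) (CFHG.pileId m τ), ?_, ?_, ?_⟩
  · -- length bound
    have hq : k / 2 = m - 1 := by omega
    have key := CFHG.arith k (m-1) hk2 hq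
    have hm1 : m - 1 + 1 = m := by omega
    rw [hm1] at key
    rw [← hn] at key
    have key2 : (k-1)*k*(k+1) ≤
        6 * (CFHG.T (m-1) + (k*(k+1)/2 - CFHG.Tm1 m) * (m-1)) := key
    calc (k-1)*k*(k+1)/6
        ≤ 6 * (CFHG.T (m-1) + (k*(k+1)/2 - CFHG.Tm1 m) * (m-1)) / 6 :=
          Nat.div_le_div_right key2
      _ = _ := Nat.mul_div_cancel_left _ (by norm_num)
  · -- initial partition
    show CFHG.seqOf (k*(k+1)/2) (CFHG.pileId m 0) = fun a => {a}
    have h0 : CFHG.pileId m 0 = CFHG.pid1 m 0 :=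
      funext fun a => CFHG.pileId_eq_pid1 (Nat.zero_le _) a
    rw [h0]
    exact CFHG.seq_zero _ _ hm
  · intro l hl
    show ISStep _ (CFHG.seqOf (k*(k+1)/2) (CFHG.pileId m l))
      (CFHG.seqOf (k*(k+1)/2) (CFHG.pileId m (l+1)))
    rcases Nat.lt_or_ge l (CFHG.T (m-1)) with hB | hB
    · have e1 : CFHG.pileId m l = CFHG.pid1 m l :=
        funext fun a => CFHG.pileId_eq_pid1 (le_of_lt hB) a
      have e2 : CFHG.pileId m (l+1) = CFHG.pid1 m (l+1) :=
        funext fun a => CFHG.pileId_eq_pid1 hB a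
      rw [e1, e2]
      exact CFHG.build_step _ m l hm hB hTmn
    · obtain ⟨s, hs⟩ : ∃ s, l = CFHG.T (m-1) + s := ⟨l - CFHG.T (m-1), by omega⟩
      have hsr : s < (k*(k+1)/2 - CFHG.Tm1 m) * (m-1) := by omega
      have hquot : s / (m-1) < k*(k+1)/2 - CFHG.Tm1 m :=
        (Nat.div_lt_iff_lt_mul (by omega : 0 < m-1)).mpr hsr
      have hx : CFHG.Tm1 m + s/(m-1) < k*(k+1)/2 := by omega
      have e1 : CFHG.pileId m l = CFHG.pid2 m s := by
        rw [hs]; exact funext fun a => CFHG.pileId_eq_pid2 a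
      have e2 : CFHG.pileId m (l+1) = CFHG.pid2 m (s+1) := by
        have hls : l + 1 = CFHG.T (m-1) + (s+1) := by omega
        rw [hls]; exact funext fun a => CFHG.pileId_eq_pid2 a
      rw [e1, e2]
      exact CFHG.feed_step _ m s hm hTmn hx
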